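/- arXiv:1911.00761 — 10 statements merged into one kernel-verified Lean document; each statement's English description precedes it below -/
import Mathlib

section
/- Let T be a finite nonempty type, let ε ≥ 0 be a real number, and let f, g, b : T → ℝ be nonnegative functions such that ∑_{z∈T} g(z)·b(z) > 0 and for every z ∈ T, e^{-ε}·g(z) ≤ f(z) ≤ e^{ε}·g(z). Then ∑_{z∈T} f(z)·b(z) > 0 and for every x ∈ T, e^{-2ε} · (g(x)·b(x) / ∑_{z∈T} g(z)·b(z)) ≤ f(x)·b(x) / ∑_{z∈T} f(z)·b(z) ≤ e^{2ε} · (g(x)·b(x) / ∑_{z∈T} g(z)·b(z)). -/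
theorem posterior_pointwise_indistinguishable
    {T : Type*} [Fintype T] [Nonempty T] (ε : ℝ) (hε : 0 ≤ ε)
    (f g b : T → ℝ)
    (hf : ∀ z, 0 ≤ f z) (hg : ∀ z, 0 ≤ g z) (hb : ∀ z, 0 ≤ b z)
    (hpos : 0 < ∑ z, g z * b z)
    (hlo : ∀ z, Real.exp (-ε) * g z ≤ f z)
    (hhi : ∀ z, f z ≤ Real.exp ε * g z) :
    0 < ∑ z, f z * b z ∧
      ∀ x : T,
        Real.exp (-(2 * ε)) * (g x * b x / ∑ z, g z * b z)
            ≤ f x * b x / ∑ z, f z * b z ∧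
        f x * b x / ∑ z, f z * b z
            ≤ Real.exp (2 * ε) * (g x * b x / ∑ z, g z * b z) := by
  set Sg := ∑ z, g z * b z with hSg
  set Sf := ∑ z, f z * b z with hSf
  have hSlo : Real.exp (-ε) * Sg ≤ Sf := by
    rw [hSg, hSf, Finset.mul_sum]
    apply Finset.sum_le_sum
    intro z _
    rw [← mul_assoc]
    exact mul_le_mul_of_nonneg_right (hlo z) (hb z)
  have hShi : Sf ≤ Real.exp ε * Sg := by
    rw [hSg, hSf, Finset.mul_sum]
    apply Finset.sum_le_sum
    intro z _
    rw [← mul_assoc]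
    exact mul_le_mul_of_nonneg_right (hhi z) (hb z)
  have hSfpos : 0 < Sf :=
    lt_of_lt_of_le (by positivity) hSlo
  refine ⟨hSfpos, fun x => ?_⟩
  have hnum_lo : Real.exp (-ε) * (g x * b x) ≤ f x * b x := by
    rw [← mul_assoc]; exact mul_le_mul_of_nonneg_right (hlo x) (hb x)
  have hnum_hi : f x * b x ≤ Real.exp ε * (g x * b x) := by
    rw [← mul_assoc]; exact mul_le_mul_of_nonneg_right (hhi x) (hb x)
  have hgb : 0 ≤ g x * b x := mul_nonneg (hg x) (hb x)
  constructor
  · have h1 : Real.exp (-ε) * (g x * b x) / (Real.exp ε * Sg) ≤ f x * b x / Sf :=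
      div_le_div₀ (mul_nonneg (hf x) (hb x)) hnum_lo (by positivity) hShi
    calc Real.exp (-(2 * ε)) * (g x * b x / Sg)
        = Real.exp (-ε) * (g x * b x) / (Real.exp ε * Sg) := by
          have h2 : Real.exp (-(2 * ε)) * Real.exp ε = Real.exp (-ε) := by
            rw [← Real.exp_add]; ring_nf
          field_simp
          linear_combination (g x * b x) * h2
      _ ≤ f x * b x / Sf := h1
  · have h1 : f x * b x / Sf ≤ Real.exp ε * (g x * b x) / (Real.exp (-ε) * Sg) :=
      div_le_div₀ (by positivity) hnum_hi (by positivity) hSlo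
    calc f x * b x / Sf ≤ Real.exp ε * (g x * b x) / (Real.exp (-ε) * Sg) := h1
      _ = Real.exp (2 * ε) * (g x * b x / Sg) := by
          have h2 : Real.exp (2 * ε) * Real.exp (-ε) = Real.exp ε := by
            rw [← Real.exp_add]; ring_nf
          field_simp
          linear_combination (norm := ring_nf) -(g x * b x) * h2
end

section
/- Let T be a finite type, let ε ≥ 0 be a real number, and let p, q : T → ℝ be nonnegative functions with ∑_{t∈T} p(t) = 1 and ∑_{t∈T} q(t) = 1, such that for every a ∈ T, e^{-ε}·q(a) ≤ p(a) ≤ e^{ε}·q(a). Then for every subset S ⊆ T, |∑_{a∈S} p(a) − ∑_{a∈S} q(a)| ≤ e^{ε} − 1. -/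
theorem pointwise_indistinguishable_implies_SD_le
    {T : Type*} [Fintype T] (ε : ℝ) (hε : 0 ≤ ε)
    (p q : T → ℝ)
    (hp : ∀ t, 0 ≤ p t) (hq : ∀ t, 0 ≤ q t)
    (hps : ∑ t, p t = 1) (hqs : ∑ t, q t = 1)
    (hlo : ∀ a, Real.exp (-ε) * q a ≤ p a)
    (hhi : ∀ a, p a ≤ Real.exp ε * q a) :
    ∀ S : Finset T, |∑ a ∈ S, p a - ∑ a ∈ S, q a| ≤ Real.exp ε - 1 := by
  intro S
  have hqs' : ∑ a ∈ S, q a ≤ 1 := by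
    rw [← hqs]
    exact Finset.sum_le_sum_of_subset_of_nonneg (Finset.subset_univ S)
      fun i _ _ => hq i
  have hqS0 : 0 ≤ ∑ a ∈ S, q a := Finset.sum_nonneg fun i _ => hq i
  have h1 : (1:ℝ) ≤ Real.exp ε := by
    simpa using Real.exp_le_exp.2 hε
  have hne : Real.exp (-ε) ≤ 1 := by
    simpa using Real.exp_le_exp.2 (neg_nonpos.2 hε)
  rw [abs_sub_le_iff]
  constructor
  · have : ∑ a ∈ S, p a ≤ Real.exp ε * ∑ a ∈ S, q a := by
      rw [Finset.mul_sum]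
      exact Finset.sum_le_sum fun i _ => hhi i
    nlinarith
  · have : Real.exp (-ε) * ∑ a ∈ S, q a ≤ ∑ a ∈ S, p a := by
      rw [Finset.mul_sum]
      exact Finset.sum_le_sum fun i _ => hlo i
    have h2 : Real.exp (-ε) * Real.exp ε = 1 := by
      rw [← Real.exp_add]; simp
    nlinarith [Real.exp_pos (-ε)]
end

section
/- Let 𝒟 be a finite nonempty type with a distinguished default element ⊥ ∈ 𝒟, let n ∈ ℕ, let Ω be a finite type, let ε ≥ 0, and let Y : (Fin n → 𝒟) → Ω → ℝ be a mechanism (nonnegative with ∑_{ω∈Ω} Y(x)(ω) = 1 for every database x : Fin n → 𝒟). Suppose Y satisfies ε-differential privacy: for every x : Fin n → 𝒟, every i : Fin n, every v ∈ 𝒟, and every ω ∈ Ω, Y(x)(ω) ≤ e^{ε} · Y(Function.update x i v)(ω). Then for every prior b : (Fin n → 𝒟) → ℝ (nonnegative with ∑_x b(x) = 1), every i : Fin n, every ω ∈ Ω such that ∑_z Y(z)(ω)·b(z) > 0 and ∑_z Y(Function.update z i ⊥)(ω)·b(z) > 0, and every set S of databases, |∑_{x∈S} Y(x)(ω)·b(x)/∑_z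 Y(z)(ω)·b(z) − ∑_{x∈S} Y(Function.update x i ⊥)(ω)·b(x)/∑_z Y(Function.update z i ⊥)(ω)·b(z)| ≤ e^{2ε} − 1. -/
lemma dp_key_ineq (e a c TA TB : ℝ) (he : 1 ≤ e) (ha : a ≤ e * c) (hTB : TB ≤ e * TA)
    (hc : 0 ≤ c) (hcT : c ≤ TB) (hTA : 0 < TA) (hTBpos : 0 < TB) :
    a / TA - c / TB ≤ e ^ 2 - 1 := by
  have h1 : a / TA ≤ e ^ 2 * (c / TB) := by
    rw [div_le_iff₀ hTA]
    have h2 : c / TB * TB = c := div_mul_cancel₀ c hTBpos.ne'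
    nlinarith [div_nonneg hc hTBpos.le, mul_le_mul_of_nonneg_left hTB (div_nonneg hc hTBpos.le)]
  have h3 : c / TB ≤ 1 := (div_le_one hTBpos).2 hcT
  have he2 : (0:ℝ) ≤ e ^ 2 - 1 := by nlinarith
  have h4 : (e ^ 2 - 1) * (c / TB) ≤ (e ^ 2 - 1) * 1 := by
    exact mul_le_mul_of_nonneg_left h3 he2
  linarith

theorem dp_implies_semantic_privacy
    {D : Type*} [Fintype D] [Nonempty D] (dflt : D) (n : ℕ)
    {Ω : Type*} [Fintype Ω] (ε : ℝ) (hε : 0 ≤ ε)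
    (Y : (Fin n → D) → Ω → ℝ)
    (hYnn : ∀ x ω, 0 ≤ Y x ω) (hYsum : ∀ x, ∑ ω, Y x ω = 1)
    (hDP : ∀ (x : Fin n → D) (i : Fin n) (v : D) (ω : Ω),
      Y x ω ≤ Real.exp ε * Y (Function.update x i v) ω) :
    ∀ (b : (Fin n → D) → ℝ), (∀ x, 0 ≤ b x) → (∑ x, b x = 1) →
      ∀ (i : Fin n) (ω : Ω),
        0 < ∑ z, Y z ω * b z →
        0 < ∑ z, Y (Function.update z i dflt) ω * b z →
        ∀ S : Finset (Fin n → D),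
          |(∑ x ∈ S, Y x ω * b x) / (∑ z, Y z ω * b z) -
              (∑ x ∈ S, Y (Function.update x i dflt) ω * b x) /
                (∑ z, Y (Function.update z i dflt) ω * b z)|
            ≤ Real.exp (2 * ε) - 1 := by
  intro b hbnn hbsum i ω hTA hTB S
  set e := Real.exp ε with he
  have he1 : 1 ≤ e := Real.one_le_exp hε
  have hexp2 : Real.exp (2 * ε) = e ^ 2 := by
    rw [two_mul, Real.exp_add, sq]
  -- pointwise DP both directions
  have hfwd : ∀ x : Fin n → D, Y x ω * b x ≤ e * (Y (Function.update x i dflt) ω * b x) := by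
    intro x
    have := mul_le_mul_of_nonneg_right (hDP x i dflt ω) (hbnn x)
    linarith [this]
  have hbwd : ∀ x : Fin n → D,
      Y (Function.update x i dflt) ω * b x ≤ e * (Y x ω * b x) := by
    intro x
    have h := hDP (Function.update x i dflt) i (x i) ω
    rw [Function.update_idem, Function.update_eq_self] at h
    have := mul_le_mul_of_nonneg_right h (hbnn x)
    linarith [this]
  have hnn : ∀ x : Fin n → D, 0 ≤ Y x ω * b x := fun x => mul_nonneg (hYnn x ω) (hbnn x)
  have hnn' : ∀ x : Fin n → D, 0 ≤ Y (Function.update x i dflt) ω * b x :=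
    fun x => mul_nonneg (hYnn _ ω) (hbnn x)
  set a := ∑ x ∈ S, Y x ω * b x with ha
  set c := ∑ x ∈ S, Y (Function.update x i dflt) ω * b x with hc
  set TA := ∑ z, Y z ω * b z with hTAdef
  set TB := ∑ z, Y (Function.update z i dflt) ω * b z with hTBdef
  have hac : a ≤ e * c := by
    rw [ha, hc, Finset.mul_sum]
    exact Finset.sum_le_sum fun x _ => hfwd x
  have hca : c ≤ e * a := by
    rw [ha, hc, Finset.mul_sum]
    exact Finset.sum_le_sum fun x _ => hbwd x
  have hTBA : TB ≤ e * TA := by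
    rw [hTAdef, hTBdef, Finset.mul_sum]
    exact Finset.sum_le_sum fun x _ => hbwd x
  have hTAB : TA ≤ e * TB := by
    rw [hTAdef, hTBdef, Finset.mul_sum]
    exact Finset.sum_le_sum fun x _ => hfwd x
  have hanng : 0 ≤ a := Finset.sum_nonneg fun x _ => hnn x
  have hcnng : 0 ≤ c := Finset.sum_nonneg fun x _ => hnn' x
  have haT : a ≤ TA := Finset.sum_le_sum_of_subset_of_nonneg (Finset.subset_univ S)
    (fun x _ _ => hnn x)
  have hcT : c ≤ TB := Finset.sum_le_sum_of_subset_of_nonneg (Finset.subset_univ S)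
    (fun x _ _ => hnn' x)
  rw [hexp2, abs_sub_le_iff]
  constructor
  · exact dp_key_ineq e a c TA TB he1 hac hTBA hcnng hcT hTA hTB
  · exact dp_key_ineq e c a TB TA he1 hca hTAB hanng haT hTB hTA
end

section
/- Let 𝒟 be a finite nonempty type with a distinguished default element ⊥ ∈ 𝒟, let n ∈ ℕ, let Ω be a finite type, let ε ≥ 0, and let Y : (Fin n → 𝒟) → Ω → ℝ be a mechanism (nonnegative with ∑_{ω∈Ω} Y(x)(ω) = 1 for every database x : Fin n → 𝒟). Suppose Y satisfies (1/2 − 1/(e^{ε}+1))-semantic privacy: for every prior b : (Fin n → 𝒟) → ℝ (nonnegative with ∑_x b(x) = 1), every i : Fin n, every ω ∈ Ω such that ∑_z Y(z)(ω)·b(z) > 0 and ∑_z Y(Function.update z i ⊥)(ω)·b(z) > 0, and every set S of databases, |∑_{x∈S} Y(x)(ω)·b(x)/∑_z Y(z)(ω)·b(z) − ∑_{x∈S} Y(Function.update x i ⊥)(ω)·b(x)/∑_z Y(Function.update z i ⊥)(ω)·b(z)| ≤ 1/2 − 1/(e^{ε}+1). Then Y satisfies ε-differential privacy in the following sense: for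 every x : Fin n → 𝒟, every i : Fin n, every v ∈ 𝒟, and every ω ∈ Ω with Y(Function.update x i ⊥)(ω) > 0, Y(x)(ω) ≤ e^{ε} · Y(Function.update x i v)(ω). -/
theorem semantic_privacy_implies_dp
    {D : Type*} [Fintype D] [Nonempty D] (dflt : D) (n : ℕ)
    {Ω : Type*} [Fintype Ω] (ε : ℝ) (hε : 0 ≤ ε)
    (Y : (Fin n → D) → Ω → ℝ)
    (hYnn : ∀ x ω, 0 ≤ Y x ω) (hYsum : ∀ x, ∑ ω, Y x ω = 1)
    (hSP : ∀ (b : (Fin n → D) → ℝ), (∀ x, 0 ≤ b x) → (∑ x, b x = 1) →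
      ∀ (i : Fin n) (ω : Ω),
        0 < ∑ z, Y z ω * b z →
        0 < ∑ z, Y (Function.update z i dflt) ω * b z →
        ∀ S : Finset (Fin n → D),
          |(∑ x ∈ S, Y x ω * b x) / (∑ z, Y z ω * b z) -
              (∑ x ∈ S, Y (Function.update x i dflt) ω * b x) /
                (∑ z, Y (Function.update z i dflt) ω * b z)|
            ≤ 1 / 2 - 1 / (Real.exp ε + 1)) :
    ∀ (x : Fin n → D) (i : Fin n) (v : D) (ω : Ω),
      0 < Y (Function.update x i dflt) ω →
      Y x ω ≤ Real.exp ε * Y (Function.update x i v) ω := by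
  intro x i v ω hx0
  classical
  have hE1 : (1:ℝ) ≤ Real.exp ε := Real.one_le_exp hε
  set x' := Function.update x i v with hx'def
  by_cases hxx : x' = x
  · rw [hxx]
    nlinarith [hYnn x ω]
  rcases eq_or_lt_of_le (hYnn x ω) with hYx | hYx
  · rw [← hYx]
    have := hYnn x' ω
    positivity
  set b : (Fin n → D) → ℝ := fun z => if z = x then 1/2 else if z = x' then 1/2 else 0
    with hbdef
  have hbnn : ∀ z, 0 ≤ b z := by
    intro z
    simp only [hbdef]
    split <;> norm_num
    split <;> norm_num
  have hsum : ∀ f : (Fin n → D) → ℝ, ∑ z, f z * b z = f x * (1/2) + f x' * (1/2) := by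
    intro f
    have key : ∀ z, f z * b z =
        (if z = x then f x * (1/2) else 0) + (if z = x' then f x' * (1/2) else 0) := by
      intro z
      rcases eq_or_ne z x with h | h
      · subst h
        simp [hbdef, fun h' : z = x' => hxx h'.symm, Ne.symm hxx]
      · rcases eq_or_ne z x' with h2 | h2
        · subst h2
          simp [hbdef, h]
        · simp [hbdef, h, h2]
    rw [Finset.sum_congr rfl (fun z _ => key z), Finset.sum_add_distrib,
      Finset.sum_ite_eq' Finset.univ x, Finset.sum_ite_eq' Finset.univ x']
    simp
  have hbsum : ∑ z, b z = 1 := by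
    have h := hsum (fun _ => (1:ℝ))
    simp only [one_mul] at h
    rw [h]; norm_num
  have hden0 : 0 < ∑ z, Y z ω * b z := by
    rw [hsum (fun z => Y z ω)]
    have := hYnn x' ω
    nlinarith
  have hupd : Function.update x' i dflt = Function.update x i dflt := by
    rw [hx'def, Function.update_idem]
  have hdeni : 0 < ∑ z, Y (Function.update z i dflt) ω * b z := by
    rw [hsum (fun z => Y (Function.update z i dflt) ω)]
    simp only [hupd]
    nlinarith
  have key := hSP b hbnn hbsum i ω hden0 hdeni {x}
  rw [Finset.sum_singleton, Finset.sum_singleton] at key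
  have hbx : b x = 1/2 := by simp [hbdef]
  rw [hbx, hsum (fun z => Y z ω)] at key
  have hdeni' : ∑ z, Y (Function.update z i dflt) ω * b z = Y (Function.update x i dflt) ω := by
    rw [hsum (fun z => Y (Function.update z i dflt) ω)]
    simp only [hupd]; ring
  rw [hdeni'] at key
  have h2 : Y (Function.update x i dflt) ω * (1/2) / Y (Function.update x i dflt) ω = 1/2 := by
    field_simp
  rw [h2] at key
  have key2 := (abs_le.mp key).2
  have hD : 0 < Y x ω * (1/2) + Y x' ω * (1/2) := by
    have := hYnn x' ω; nlinarith
  have hEp : (0:ℝ) < Real.exp ε + 1 := by linarith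
  have h3 : Y x ω * (1/2) / (Y x ω * (1/2) + Y x' ω * (1/2)) ≤ 1 - 1/(Real.exp ε + 1) := by
    linarith
  rw [div_le_iff₀ hD] at h3
  have hYx' := hYnn x' ω
  have h4 : (1 - 1/(Real.exp ε + 1)) = Real.exp ε / (Real.exp ε + 1) := by
    field_simp
    ring
  rw [h4] at h3
  have h5 : Y x ω * (Real.exp ε + 1) ≤ Real.exp ε * (Y x ω + Y x' ω) := by
    have := mul_le_mul_of_nonneg_right h3 hEp.le
    calc Y x ω * (Real.exp ε + 1) = Y x ω * (1/2) * (Real.exp ε + 1) * 2 := by ring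
      _ ≤ Real.exp ε / (Real.exp ε + 1) * (Y x ω * (1/2) + Y x' ω * (1/2)) * (Real.exp ε + 1) * 2 := by nlinarith
      _ = Real.exp ε * (Y x ω + Y x' ω) := by field_simp
  nlinarith
end

section
/- Let T and Ω be finite types, let ε ≥ 0 be a real number, and let M, N : T → Ω → ℝ be nonnegative functions such that for every t ∈ T and ω ∈ Ω, e^{-ε}·N(t)(ω) ≤ M(t)(ω) ≤ e^{ε}·N(t)(ω). Then for every nonnegative prior b : T → ℝ with ∑_{t∈T} b(t) = 1, and every ω ∈ Ω with ∑_{z∈T} N(z)(ω)·b(z) > 0, it holds that ∑_{z∈T} M(z)(ω)·b(z) > 0 and for every subset S ⊆ T, |∑_{t∈S} M(t)(ω)·b(t)/∑_{z∈T} M(z)(ω)·b(z) − ∑_{t∈S} N(t)(ω)·b(t)/∑_{z∈T} N(z)(ω)·b(z)| ≤ e^{2ε} − 1. -/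
theorem bdp_implies_bayesian_semantic_privacy
    {T : Type*} [Fintype T] {Ω : Type*} [Fintype Ω] (ε : ℝ) (hε : 0 ≤ ε)
    (M N : T → Ω → ℝ)
    (hM : ∀ t ω, 0 ≤ M t ω) (hN : ∀ t ω, 0 ≤ N t ω)
    (hlo : ∀ t ω, Real.exp (-ε) * N t ω ≤ M t ω)
    (hhi : ∀ t ω, M t ω ≤ Real.exp ε * N t ω) :
    ∀ (b : T → ℝ), (∀ t, 0 ≤ b t) → (∑ t, b t = 1) →
      ∀ ω : Ω, 0 < ∑ z, N z ω * b z →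
        0 < ∑ z, M z ω * b z ∧
        ∀ S : Finset T,
          |(∑ t ∈ S, M t ω * b t) / (∑ z, M z ω * b z) -
              (∑ t ∈ S, N t ω * b t) / (∑ z, N z ω * b z)|
            ≤ Real.exp (2 * ε) - 1 := by
  intro b hb hb1 ω hB
  have hexp : (0:ℝ) < Real.exp ε := Real.exp_pos _
  have hexpneg : (0:ℝ) < Real.exp (-ε) := Real.exp_pos _
  -- general lower/upper bounds between weighted sums
  have key : ∀ (S : Finset T),
      Real.exp (-ε) * ∑ t ∈ S, N t ω * b t ≤ ∑ t ∈ S, M t ω * b t ∧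
      ∑ t ∈ S, M t ω * b t ≤ Real.exp ε * ∑ t ∈ S, N t ω * b t := by
    intro S
    constructor
    · rw [Finset.mul_sum]
      apply Finset.sum_le_sum
      intro i _
      have h := hlo i ω
      nlinarith [hb i]
    · rw [Finset.mul_sum]
      apply Finset.sum_le_sum
      intro i _
      have h := hhi i ω
      nlinarith [hb i]
  have hAB := key Finset.univ
  have hA : 0 < ∑ z, M z ω * b z := by
    have := hAB.1
    nlinarith
  refine ⟨hA, ?_⟩
  intro S
  set A := ∑ z, M z ω * b z with hAdef
  set B := ∑ z, N z ω * b z with hBdef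
  set AS := ∑ t ∈ S, M t ω * b t with hASdef
  set BS := ∑ t ∈ S, N t ω * b t with hBSdef
  have hASnn : 0 ≤ AS := Finset.sum_nonneg fun i _ => mul_nonneg (hM i ω) (hb i)
  have hBSnn : 0 ≤ BS := Finset.sum_nonneg fun i _ => mul_nonneg (hN i ω) (hb i)
  have hASA : AS ≤ A :=
    Finset.sum_le_sum_of_subset_of_nonneg (Finset.subset_univ S)
      (fun i _ _ => mul_nonneg (hM i ω) (hb i))
  have hBSB : BS ≤ B :=
    Finset.sum_le_sum_of_subset_of_nonneg (Finset.subset_univ S)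
      (fun i _ _ => mul_nonneg (hN i ω) (hb i))
  have hS := key S
  have he2 : Real.exp (2 * ε) = Real.exp ε * Real.exp ε := by
    rw [← Real.exp_add]; ring_nf
  have hee : Real.exp ε * Real.exp (-ε) = 1 := by
    rw [← Real.exp_add]; simp
  have he1 : 1 ≤ Real.exp (2 * ε) := by
    exact Real.one_le_exp (by linarith)
  -- p := AS/A, q := BS/B
  have hp1 : AS / A ≤ 1 := div_le_one_of_le₀ hASA hA.le
  have hq1 : BS / B ≤ 1 := div_le_one_of_le₀ hBSB hB.le
  have hpnn : 0 ≤ AS / A := div_nonneg hASnn hA.le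
  have hqnn : 0 ≤ BS / B := div_nonneg hBSnn hB.le
  have hpq : AS / A ≤ Real.exp (2 * ε) * (BS / B) := by
    rw [div_le_iff₀ hA]
    -- AS ≤ e^ε BS ; e^{-ε} B ≤ A so e^ε BS ≤ e^{2ε} (BS/B) * A
    have h1 : AS ≤ Real.exp ε * BS := hS.2
    have h2 : Real.exp (-ε) * B ≤ A := hAB.1
    have hBne : B ≠ 0 := ne_of_gt hB
    have : Real.exp (2 * ε) * (BS / B) * A = Real.exp ε * (BS / B) * (Real.exp ε * A) := by
      rw [he2]; ring
    rw [this]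
    have h3 : Real.exp ε * (Real.exp (-ε) * B) ≤ Real.exp ε * A :=
      mul_le_mul_of_nonneg_left h2 hexp.le
    have h4 : Real.exp ε * (Real.exp (-ε) * B) = B := by
      rw [← mul_assoc, hee, one_mul]
    calc AS ≤ Real.exp ε * BS := h1
    _ = Real.exp ε * (BS / B) * B := by field_simp
    _ ≤ Real.exp ε * (BS / B) * (Real.exp ε * A) := by
        apply mul_le_mul_of_nonneg_left _ (by positivity)
        rw [← h4]; exact h3
  have hqp : BS / B ≤ Real.exp (2 * ε) * (AS / A) := by
    rw [div_le_iff₀ hB]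
    have h1 : BS ≤ Real.exp ε * AS := by
      have := hS.1
      nlinarith
    have h2 : Real.exp (-ε) * A ≤ B := by
      have := hAB.2
      nlinarith
    have hAne : A ≠ 0 := ne_of_gt hA
    have : Real.exp (2 * ε) * (AS / A) * B = Real.exp ε * (AS / A) * (Real.exp ε * B) := by
      rw [he2]; ring
    rw [this]
    have h4 : Real.exp ε * (Real.exp (-ε) * A) = A := by
      rw [← mul_assoc, hee, one_mul]
    calc BS ≤ Real.exp ε * AS := h1
    _ = Real.exp ε * (AS / A) * A := by field_simp
    _ ≤ Real.exp ε * (AS / A) * (Real.exp ε * B) := by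
        apply mul_le_mul_of_nonneg_left _ (by positivity)
        rw [← h4]
        exact mul_le_mul_of_nonneg_left h2 hexp.le
  rw [abs_le]
  constructor <;> nlinarith [hpq, hqp, hp1, hq1, hpnn, hqnn, he1]
end

section
/- Let T and Ω be finite types, let ε ≥ 0 be a real number, let M : T → Ω → ℝ be a mechanism (nonnegative with ∑_{ω∈Ω} M(t)(ω) = 1 for every t ∈ T), and let d : T → T be a map. Suppose that for every nonnegative prior b : T → ℝ with ∑_{t∈T} b(t) = 1, and every ω ∈ Ω with ∑_{z∈T} M(z)(ω)·b(z) > 0 and ∑_{z∈T} M(d(z))(ω)·b(z) > 0, and every subset S ⊆ T, |∑_{t∈S} M(t)(ω)·b(t)/∑_{z∈T} M(z)(ω)·b(z) − ∑_{t∈S} M(d(t))(ω)·b(t)/∑_{z∈T} M(d(z))(ω)·b(z)| ≤ 1/2 − 1/(e^{ε}+1). Then for all t, t' ∈ T with d(t) = d(t') and every ω ∈ Ω with M(d(t))(ω) > 0, it holds that M(t)(ω) ≤ e^{ε} · M(t')(ω). -/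
theorem bayesian_semantic_privacy_implies_bdp
    {T : Type*} [Fintype T] {Ω : Type*} [Fintype Ω] (ε : ℝ) (hε : 0 ≤ ε)
    (M : T → Ω → ℝ)
    (hM : ∀ t ω, 0 ≤ M t ω) (hMsum : ∀ t, ∑ ω, M t ω = 1)
    (d : T → T)
    (hBSP : ∀ (b : T → ℝ), (∀ t, 0 ≤ b t) → (∑ t, b t = 1) →
      ∀ ω : Ω, 0 < ∑ z, M z ω * b z → 0 < ∑ z, M (d z) ω * b z →
        ∀ S : Finset T,
          |(∑ t ∈ S, M t ω * b t) / (∑ z, M z ω * b z) -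
              (∑ t ∈ S, M (d t) ω * b t) / (∑ z, M (d z) ω * b z)|
            ≤ 1 / 2 - 1 / (Real.exp ε + 1)) :
    ∀ t t' : T, d t = d t' → ∀ ω : Ω, 0 < M (d t) ω →
      M t ω ≤ Real.exp ε * M t' ω := by
  classical
  intro t t' hd ω hC
  have hexp : (1:ℝ) ≤ Real.exp ε := Real.one_le_exp hε
  have hexp1 : (0:ℝ) < Real.exp ε + 1 := by positivity
  by_cases htt : t = t'
  · subst htt
    calc M t ω = 1 * M t ω := (one_mul _).symm
    _ ≤ Real.exp ε * M t ω := mul_le_mul_of_nonneg_right hexp (hM t ω)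
  by_cases hA0 : M t ω = 0
  · rw [hA0]; exact mul_nonneg (Real.exp_pos ε).le (hM t' ω)
  have hA : 0 < M t ω := lt_of_le_of_ne (hM t ω) (Ne.symm hA0)
  set A := M t ω with hAdef
  set B := M t' ω with hBdef
  set C := M (d t) ω with hCdef
  set b : T → ℝ := fun z => (if z = t then (1:ℝ) else 0)/2 + (if z = t' then (1:ℝ) else 0)/2 with hb
  have hbnn : ∀ z, 0 ≤ b z := by
    intro z; simp only [hb]; split_ifs <;> norm_num
  have key1 : ∀ (a : T) (f : T → ℝ),
      ∑ z, f z * ((if z = a then (1:ℝ) else 0)/2) = f a / 2 := by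
    intro a f
    calc ∑ z, f z * ((if z = a then (1:ℝ) else 0)/2)
        = ∑ z, (if z = a then f z / 2 else 0) :=
          Finset.sum_congr rfl (by intro z _; split_ifs <;> ring)
      _ = f a / 2 := by simp
  have hbsum : ∑ z, b z = 1 := by
    have h1 := key1 t (fun _ => (1:ℝ))
    have h2 := key1 t' (fun _ => (1:ℝ))
    simp only [one_mul] at h1 h2
    simp only [hb, Finset.sum_add_distrib, h1, h2]
    norm_num
  have hsum1 : ∀ (f : T → ℝ), ∑ z, f z * b z = f t / 2 + f t' / 2 := by
    intro f
    simp only [hb, mul_add, Finset.sum_add_distrib, key1]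
  have hden0 : ∑ z, M z ω * b z = A/2 + B/2 := hsum1 _
  have hdeni : ∑ z, M (d z) ω * b z = C := by
    rw [hsum1 (fun z => M (d z) ω)]
    simp only [← hd, ← hCdef]
    ring
  have hpos0 : 0 < ∑ z, M z ω * b z := by
    rw [hden0]; have := hM t' ω; rw [← hBdef] at this; linarith
  have hposi : 0 < ∑ z, M (d z) ω * b z := by rw [hdeni]; exact hC
  have key := hBSP b hbnn hbsum ω hpos0 hposi {t}
  rw [hden0, hdeni, Finset.sum_singleton, Finset.sum_singleton] at key
  have hbt : b t = 1/2 := by simp [hb, htt]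
  rw [hbt] at key
  have h1 : M (d t) ω * (1/2) / C = 1/2 := by
    rw [← hCdef]; field_simp
  rw [h1] at key
  have key2 : A * (1/2) / (A/2 + B/2) ≤ 1 - 1/(Real.exp ε + 1) := by
    have := abs_le.mp key
    linarith [this.2]
  have hAB : 0 < A/2 + B/2 := hden0 ▸ hpos0
  have h3 : A * (1/2) ≤ (1 - 1/(Real.exp ε + 1)) * (A/2 + B/2) :=
    (div_le_iff₀ hAB).mp key2
  have h4 : (1 - 1/(Real.exp ε + 1)) = Real.exp ε / (Real.exp ε + 1) := by
    field_simp; ring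
  rw [h4] at h3
  have h6 : A * (1/2) * (Real.exp ε + 1) ≤ Real.exp ε * (A/2 + B/2) := by
    calc A * (1/2) * (Real.exp ε + 1)
        ≤ (Real.exp ε / (Real.exp ε + 1) * (A/2 + B/2)) * (Real.exp ε + 1) :=
          mul_le_mul_of_nonneg_right h3 hexp1.le
      _ = Real.exp ε * (A/2 + B/2) := by field_simp
  nlinarith [h6, hA, hexp1]
end

section
/- Let P be a probability measure on a measurable space, let B and E be measurable events with 0 < P(B) < 1 and P(E ∩ Bᶜ) > 0, and let ε > 0. Set A = P(E | B) / P(E | Bᶜ) and let g : [0,1] → ℝ be defined by g(x) = (1−x)/(e^{−ε}−x) if 0 ≤ x ≤ 1/(1+e^{ε}) and g(x) = (e^{ε}−1+x)/x if 1/(1+e^{ε}) < x ≤ 1. Then [ P(B | E) ≤ e^{ε}·P(B) and P(Bᶜ | E) ≥ e^{−ε}·P(Bᶜ) ] if and only if A ≤ g(P(B)). -/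
open MeasureTheory

/-- The function `g` from Lemma 1, with branches split at `1/(1+e^ε)`. -/
noncomputable def gFun (ε x : ℝ) : ℝ :=
  if x ≤ 1 / (1 + Real.exp ε) then (1 - x) / (Real.exp (-ε) - x)
  else (Real.exp ε - 1 + x) / x

lemma key' (e b p q : ℝ) (he1 : 1 < e) (hb0 : 0 < b) (hb1 : b < 1)
    (hp : 0 ≤ p) (hq : 0 < q) :
    (p ≤ e * b * (p + q) ∧ e⁻¹ * (1 - b) * (p + q) ≤ q) ↔
      p * (1 - b) / (b * q) ≤
        (if b ≤ 1 / (1 + e) then (1 - b) / (e⁻¹ - b) else (e - 1 + b) / b) := by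
  have he0 : 0 < e := by linarith
  have hie : e⁻¹ * e = 1 := inv_mul_cancel₀ (ne_of_gt he0)
  have hei : e * e⁻¹ = 1 := mul_inv_cancel₀ (ne_of_gt he0)
  have hi0 : 0 < e⁻¹ := inv_pos.mpr he0
  have hs : 0 < p + q := by linarith
  have h1b : 0 < 1 - b := by linarith
  have hbq : 0 < b * q := mul_pos hb0 hq
  rcases le_or_gt b (1 / (1 + e)) with hsplit | hsplit
  · have hbe : b * (1 + e) ≤ 1 := by
      rw [div_eq_inv_mul, mul_one] at hsplit
      calc b * (1 + e) ≤ (1 + e)⁻¹ * (1 + e) := by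
            apply mul_le_mul_of_nonneg_right hsplit (by linarith)
        _ = 1 := inv_mul_cancel₀ (by linarith)
    have hdb : 0 < e⁻¹ - b := by nlinarith
    rw [if_pos hsplit, div_le_div_iff₀ hbq hdb]
    constructor
    · rintro ⟨h1, h2⟩
      have k1 : p * e⁻¹ ≤ b * (p + q) := by
        have := mul_le_mul_of_nonneg_left h1 (le_of_lt hi0)
        calc p * e⁻¹ = e⁻¹ * p := by ring
          _ ≤ e⁻¹ * (e * b * (p + q)) := this
          _ = (e⁻¹ * e) * (b * (p + q)) := by ring
          _ = b * (p + q) := by rw [hie]; ring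
      nlinarith [mul_le_mul_of_nonneg_left k1 (le_of_lt h1b)]
    · intro h
      have k1 : p * (e⁻¹ - b) ≤ b * q := by nlinarith
      constructor
      · have t4 := mul_le_mul_of_nonneg_left k1 (le_of_lt he0)
        have t5 : e * (p * (e⁻¹ - b)) = p - e * b * p := by
          field_simp
        rw [t5] at t4
        nlinarith [t4]
      · have poly : (1 - b) * b ≤ (e - 1 + b) * (e⁻¹ - b) := by nlinarith
        have k2 : (1 - b) * p ≤ (e - 1 + b) * q := by
          have t1 : (1 - b) * (p * (e⁻¹ - b)) ≤ (1 - b) * (b * q) :=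
            mul_le_mul_of_nonneg_left k1 (le_of_lt h1b)
          have t2 : (1 - b) * b * q ≤ (e - 1 + b) * (e⁻¹ - b) * q :=
            mul_le_mul_of_nonneg_right poly (le_of_lt hq)
          have t3 : ((1 - b) * p) * (e⁻¹ - b) ≤ ((e - 1 + b) * q) * (e⁻¹ - b) := by
            nlinarith
          exact le_of_mul_le_mul_right t3 hdb
        have k3 : (1 - b) * (p + q) ≤ e * q := by linarith [k2]
        calc e⁻¹ * (1 - b) * (p + q) = e⁻¹ * ((1 - b) * (p + q)) := by ring
          _ ≤ e⁻¹ * (e * q) := mul_le_mul_of_nonneg_left k3 (le_of_lt hi0)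
          _ = q := by rw [← mul_assoc, hie, one_mul]
  · rw [if_neg (not_le.mpr hsplit), div_le_div_iff₀ hbq hb0]
    have hbe : 1 < b * (1 + e) := by
      rw [div_lt_iff₀ (by linarith)] at hsplit; linarith
    constructor
    · rintro ⟨h1, h2⟩
      have k2 : (1 - b) * (p + q) ≤ e * q := by
        have := mul_le_mul_of_nonneg_left h2 (le_of_lt he0)
        calc (1 - b) * (p + q) = e * (e⁻¹ * (1 - b) * (p + q)) := by
              rw [show e * (e⁻¹ * (1 - b) * (p + q)) = (e * e⁻¹) * ((1 - b) * (p + q)) by ring,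
                hei, one_mul]
          _ ≤ e * q := this
      linarith [mul_le_mul_of_nonneg_left k2 (le_of_lt hb0)]
    · intro h
      have k2 : (1 - b) * p ≤ (e - 1 + b) * q := by
        have t0 : ((1 - b) * p) * b ≤ ((e - 1 + b) * q) * b := by linarith [h]
        exact le_of_mul_le_mul_right t0 hb0
      constructor
      · rcases le_or_gt (e⁻¹ - b) 0 with hdb | hdb
        · have h1eb : 1 ≤ e * b := by
            have t0 := mul_le_mul_of_nonneg_left hdb (le_of_lt he0)
            have t1 : e * (e⁻¹ - b) = 1 - e * b := by rw [mul_sub, hei]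
            rw [t1] at t0; linarith
          nlinarith [mul_nonneg (by linarith : (0:ℝ) ≤ e * b - 1) (le_of_lt hs)]
        · have hprod : 0 ≤ (1 - e⁻¹) * (b * (1 + e) - 1) :=
            mul_nonneg (by nlinarith [hei]) (by linarith)
          have heib : e⁻¹ * e * b = b := by rw [hie, one_mul]
          have poly : (e - 1 + b) * (e⁻¹ - b) ≤ (1 - b) * b := by
            nlinarith [hprod, heib, hei]
          have t1 : (1 - b) * p * (e⁻¹ - b) ≤ (e - 1 + b) * q * (e⁻¹ - b) :=
            mul_le_mul_of_nonneg_right k2 (le_of_lt hdb)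
          have t2 : (e - 1 + b) * (e⁻¹ - b) * q ≤ (1 - b) * b * q :=
            mul_le_mul_of_nonneg_right poly (le_of_lt hq)
          have k1 : p * (e⁻¹ - b) ≤ b * q := by
            have t3 : (p * (e⁻¹ - b)) * (1 - b) ≤ (b * q) * (1 - b) := by nlinarith
            exact le_of_mul_le_mul_right t3 h1b
          have t4 := mul_le_mul_of_nonneg_left k1 (le_of_lt he0)
          have t5 : e * (p * (e⁻¹ - b)) = p - e * b * p := by
            field_simp
          rw [t5] at t4
          linarith [t4]
      · have k3 : (1 - b) * (p + q) ≤ e * q := by linarith [k2]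
        calc e⁻¹ * (1 - b) * (p + q) = e⁻¹ * ((1 - b) * (p + q)) := by ring
          _ ≤ e⁻¹ * (e * q) := mul_le_mul_of_nonneg_left k3 (le_of_lt hi0)
          _ = q := by rw [← mul_assoc, hie, one_mul]

lemma key (ε b p q : ℝ) (hε : 0 < ε) (hb0 : 0 < b) (hb1 : b < 1)
    (hp : 0 ≤ p) (hq : 0 < q) :
    (p / (p + q) ≤ Real.exp ε * b ∧ q / (p + q) ≥ Real.exp (-ε) * (1 - b)) ↔
      (p / b) / (q / (1 - b)) ≤ gFun ε b := by
  have he1 : 1 < Real.exp ε := by have := Real.add_one_le_exp ε; linarith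
  have hs : 0 < p + q := by linarith
  have h1b : 0 < 1 - b := by linarith
  have hA : (p / b) / (q / (1 - b)) = p * (1 - b) / (b * q) := by
    field_simp
  rw [hA, div_le_iff₀ hs, ge_iff_le, le_div_iff₀ hs, Real.exp_neg, gFun, Real.exp_neg]
  exact key' (Real.exp ε) b p q he1 hb0 hb1 hp hq

theorem membership_privacy_iff_ratio_le_g
    {α : Type*} [MeasurableSpace α] (P : Measure α) [IsProbabilityMeasure P]
    (B E : Set α) (hB : MeasurableSet B) (hE : MeasurableSet E)
    (hB0 : 0 < (P B).toReal) (hB1 : (P B).toReal < 1)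
    (hEBc : 0 < (P (E ∩ Bᶜ)).toReal)
    (ε : ℝ) (hε : 0 < ε) :
    ((P (B ∩ E)).toReal / (P E).toReal ≤ Real.exp ε * (P B).toReal ∧
        (P (Bᶜ ∩ E)).toReal / (P E).toReal ≥ Real.exp (-ε) * (P Bᶜ).toReal)
      ↔ ((P (E ∩ B)).toReal / (P B).toReal) /
            ((P (E ∩ Bᶜ)).toReal / (P Bᶜ).toReal)
          ≤ gFun ε (P B).toReal := by
  set b := (P B).toReal with hb
  set p := (P (E ∩ B)).toReal with hpdef
  set q := (P (E ∩ Bᶜ)).toReal with hqdef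
  have hp : 0 ≤ p := ENNReal.toReal_nonneg
  have hBE : (P (B ∩ E)).toReal = p := by rw [Set.inter_comm]
  have hBcE : (P (Bᶜ ∩ E)).toReal = q := by rw [Set.inter_comm]
  have hEsplit : (P E).toReal = p + q := by
    have h1 : P E = P (E ∩ B) + P (E ∩ Bᶜ) := by
      rw [← Set.diff_eq]
      exact (measure_inter_add_diff E hB).symm
    rw [h1, ENNReal.toReal_add (measure_ne_top P _) (measure_ne_top P _)]
  have hBc : (P Bᶜ).toReal = 1 - b := by
    rw [measure_compl hB (measure_ne_top P B), measure_univ,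
      ENNReal.toReal_sub_of_le prob_le_one ENNReal.one_ne_top, ENNReal.toReal_one]
  rw [hBE, hBcE, hEsplit, hBc]
  exact key ε b p q hε hB0 hB1 hp hEBc
end

section
/- Let ε > 0 and A ≥ 0 be real numbers, and let x be a real number with 0 ≤ x ≤ 1. Let g : [0,1] → ℝ be defined by g(x) = (1−x)/(e^{−ε}−x) if 0 ≤ x ≤ 1/(1+e^{ε}) and g(x) = (e^{ε}−1+x)/x if 1/(1+e^{ε}) < x ≤ 1. Then [ 1 − x ≥ A·(e^{−ε} − x) and A·x + 1 − x ≤ e^{ε} ] if and only if A ≤ g(x). -/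
theorem two_inequalities_iff_le_g
    (ε A x : ℝ) (hε : 0 < ε) (hA : 0 ≤ A) (hx0 : 0 ≤ x) (hx1 : x ≤ 1) :
    (1 - x ≥ A * (Real.exp (-ε) - x) ∧ A * x + 1 - x ≤ Real.exp ε) ↔
      A ≤ gFun ε x := by
  have hE : 1 < Real.exp ε := Real.one_lt_exp_iff.mpr hε
  set E := Real.exp ε with hEdef
  have ht : Real.exp (-ε) = E⁻¹ := Real.exp_neg ε
  have hEpos : 0 < E := by linarith
  have htE : E⁻¹ * E = 1 := inv_mul_cancel₀ (ne_of_gt hEpos)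
  have htpos : 0 < E⁻¹ := by positivity
  have htlt : E⁻¹ < 1 := by
    rw [inv_lt_one_iff₀]; right; exact hE
  have h1E : 0 < 1 + E := by linarith
  rw [gFun, ht]
  by_cases h : x ≤ 1 / (1 + E)
  · rw [if_pos h]
    have hxE : x * (1 + E) ≤ 1 := by
      rw [le_div_iff₀ h1E] at h; linarith
    have htx : 0 < E⁻¹ - x := by nlinarith
    rw [le_div_iff₀ htx]
    constructor
    · rintro ⟨h1, _⟩; linarith
    · intro h1
      refine ⟨by linarith, ?_⟩
      nlinarith [mul_le_mul_of_nonneg_left h1 hx0,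
        mul_le_mul_of_nonneg_left hxE (by linarith : (0:ℝ) ≤ 1 - E⁻¹)]
  · rw [if_neg h]
    push_neg at h
    have hxpos : 0 < x := lt_trans (by positivity) h
    have hxE : 1 < x * (1 + E) := by
      rw [div_lt_iff₀ h1E] at h; linarith
    rw [le_div_iff₀ hxpos]
    constructor
    · rintro ⟨_, h2⟩; linarith
    · intro h2
      refine ⟨?_, by linarith⟩
      rcases le_or_gt E⁻¹ x with hc | hc
      · nlinarith [mul_nonneg hA (by linarith : (0:ℝ) ≤ x - E⁻¹)]
      · nlinarith [mul_le_mul_of_nonneg_right h2 (by linarith : (0:ℝ) ≤ E⁻¹ - x),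
          mul_le_mul_of_nonneg_left (le_of_lt hxE) (by linarith : (0:ℝ) ≤ 1 - E⁻¹)]
end

section
/- Let ε > 0 and let g : [0,1] → ℝ be defined by g(b) = (1−b)/(e^{−ε}−b) if 0 ≤ b ≤ 1/(1+e^{ε}) and g(b) = (e^{ε}−1+b)/b if 1/(1+e^{ε}) < b ≤ 1. Then: (i) for all b₁, b₂ with 0 ≤ b₁ ≤ b₂ ≤ 1/(1+e^{ε}), g(b₁) ≤ g(b₂); (ii) for all b₁, b₂ with 1/(1+e^{ε}) < b₁ ≤ b₂ ≤ 1, g(b₁) ≥ g(b₂); (iii) g(0) = g(1) = e^{ε}; and (iv) for every b with 0 ≤ b ≤ 1, g(b) ≥ e^{ε}. -/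
theorem gFun_monotonicity_and_min (ε : ℝ) (hε : 0 < ε) :
    (∀ b₁ b₂ : ℝ, 0 ≤ b₁ → b₁ ≤ b₂ → b₂ ≤ 1 / (1 + Real.exp ε) →
        gFun ε b₁ ≤ gFun ε b₂) ∧
    (∀ b₁ b₂ : ℝ, 1 / (1 + Real.exp ε) < b₁ → b₁ ≤ b₂ → b₂ ≤ 1 →
        gFun ε b₂ ≤ gFun ε b₁) ∧
    (gFun ε 0 = Real.exp ε ∧ gFun ε 1 = Real.exp ε) ∧
    (∀ b : ℝ, 0 ≤ b → b ≤ 1 → Real.exp ε ≤ gFun ε b) := by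
  have hE : 1 < Real.exp ε := by nlinarith [Real.add_one_le_exp ε]
  set E := Real.exp ε with hEdef
  have hc : Real.exp (-ε) = 1 / E := by rw [Real.exp_neg]; rw [one_div]
  have hEpos : (0:ℝ) < E := by linarith
  have htpos : (0:ℝ) < 1 / (1 + E) := by positivity
  have htlt : 1 / (1 + E) < 1 / E := by
    apply one_div_lt_one_div_of_lt hEpos; linarith
  have htlt1 : 1 / (1 + E) < 1 := by
    rw [div_lt_one (by linarith)]; linarith
  -- (i)
  have h1 : ∀ b₁ b₂ : ℝ, 0 ≤ b₁ → b₁ ≤ b₂ → b₂ ≤ 1 / (1 + E) →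
      gFun ε b₁ ≤ gFun ε b₂ := by
    intro b₁ b₂ h0 h12 h2t
    have h1t : b₁ ≤ 1 / (1 + E) := le_trans h12 h2t
    have hd1 : 0 < 1 / E - b₁ := by linarith
    have hd2 : 0 < 1 / E - b₂ := by linarith
    simp only [gFun, if_pos (show b₁ ≤ 1 / (1 + Real.exp ε) from h1t), if_pos (show b₂ ≤ 1 / (1 + Real.exp ε) from h2t), hc]
    rw [div_le_div_iff₀ hd1 hd2]
    have hc1 : 1 / E < 1 := by rw [div_lt_one hEpos]; linarith
    nlinarith
  -- (ii)
  have h2 : ∀ b₁ b₂ : ℝ, 1 / (1 + E) < b₁ → b₁ ≤ b₂ → b₂ ≤ 1 →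
      gFun ε b₂ ≤ gFun ε b₁ := by
    intro b₁ b₂ ht1 h12 h21
    have ht2 : 1 / (1 + E) < b₂ := lt_of_lt_of_le ht1 h12
    have hp1 : 0 < b₁ := lt_trans htpos ht1
    have hp2 : 0 < b₂ := lt_trans htpos ht2
    simp only [gFun, if_neg (show ¬ b₁ ≤ 1 / (1 + Real.exp ε) from not_le.mpr ht1), if_neg (show ¬ b₂ ≤ 1 / (1 + Real.exp ε) from not_le.mpr ht2)]
    rw [div_le_div_iff₀ hp2 hp1]
    nlinarith
  -- (iii)
  have h30 : gFun ε 0 = E := by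
    simp only [gFun, if_pos (show (0:ℝ) ≤ 1 / (1 + Real.exp ε) from le_of_lt htpos), hc]
    field_simp
    ring
  have h31 : gFun ε 1 = E := by
    simp only [gFun, if_neg (show ¬ (1:ℝ) ≤ 1 / (1 + Real.exp ε) from not_le.mpr htlt1)]
    ring
  refine ⟨h1, h2, ⟨h30, h31⟩, ?_⟩
  intro b hb0 hb1
  rcases le_or_gt b (1 / (1 + E)) with h | h
  · calc E = gFun ε 0 := h30.symm
      _ ≤ gFun ε b := h1 0 b le_rfl hb0 h
  · calc E = gFun ε 1 := h31.symm
      _ ≤ gFun ε b := h2 b 1 h hb1 le_rfl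
end

section
/- Let P be a probability measure on a measurable space, let B and E be measurable events with 0 < P(B) < 1 and P(E ∩ Bᶜ) > 0, and let ε ≥ 0. If P(E | B) ≤ e^{ε}·P(E | Bᶜ), then P(B | E) ≤ e^{ε}·P(B) and P(Bᶜ | E) ≥ e^{−ε}·P(Bᶜ). -/
open MeasureTheory

lemma aux_ratio (x y b e : ℝ) (hx : 0 ≤ x) (hy : 0 < y) (hb : 0 < b)
    (hb1 : b < 1) (he : 1 ≤ e) (hr : x / b ≤ e * (y / (1 - b))) :
    x / (x + y) ≤ e * b ∧ y / (x + y) ≥ e⁻¹ * (1 - b) := by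
  have hbc : 0 < 1 - b := by linarith
  have hxy : 0 < x + y := by linarith
  have he0 : 0 < e := by linarith
  have hr' : x * (1 - b) ≤ e * y * b := by
    have h1 : x / b * (b * (1 - b)) ≤ e * (y / (1 - b)) * (b * (1 - b)) := by
      apply mul_le_mul_of_nonneg_right hr
      positivity
    calc x * (1 - b) = x / b * (b * (1 - b)) := by field_simp
    _ ≤ e * (y / (1 - b)) * (b * (1 - b)) := h1
    _ = e * y * b := by field_simp
  constructor
  · rw [div_le_iff₀ hxy]
    nlinarith [mul_nonneg (mul_nonneg hb.le hx) (sub_nonneg.2 he)]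
  · rw [ge_iff_le, le_div_iff₀ hxy, inv_mul_eq_div, div_mul_eq_mul_div,
      div_le_iff₀ he0]
    nlinarith [mul_nonneg (mul_nonneg hbc.le hy.le) (sub_nonneg.2 he)]

theorem likelihood_ratio_implies_membership_privacy
    {α : Type*} [MeasurableSpace α] (P : Measure α) [IsProbabilityMeasure P]
    (B E : Set α) (hB : MeasurableSet B) (hE : MeasurableSet E)
    (hB0 : 0 < (P B).toReal) (hB1 : (P B).toReal < 1)
    (hEBc : 0 < (P (E ∩ Bᶜ)).toReal)
    (ε : ℝ) (hε : 0 ≤ ε)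
    (hratio : (P (E ∩ B)).toReal / (P B).toReal ≤
        Real.exp ε * ((P (E ∩ Bᶜ)).toReal / (P Bᶜ).toReal)) :
    (P (B ∩ E)).toReal / (P E).toReal ≤ Real.exp ε * (P B).toReal ∧
      (P (Bᶜ ∩ E)).toReal / (P E).toReal ≥ Real.exp (-ε) * (P Bᶜ).toReal := by
  have hcompl : (P Bᶜ).toReal = 1 - (P B).toReal := by
    rw [measure_compl hB (measure_ne_top P B), measure_univ,
      ENNReal.toReal_sub_of_le prob_le_one ENNReal.one_ne_top, ENNReal.toReal_one]
  have hsplit : (P E).toReal = (P (E ∩ B)).toReal + (P (E ∩ Bᶜ)).toReal := by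
    have h := measure_inter_add_diff (μ := P) E hB
    rw [Set.diff_eq] at h
    rw [← h, ENNReal.toReal_add (measure_ne_top _ _) (measure_ne_top _ _)]
  have hBE : P (B ∩ E) = P (E ∩ B) := by rw [Set.inter_comm]
  have hBcE : P (Bᶜ ∩ E) = P (E ∩ Bᶜ) := by rw [Set.inter_comm]
  have he : 1 ≤ Real.exp ε := by
    calc (1:ℝ) = Real.exp 0 := Real.exp_zero.symm
    _ ≤ Real.exp ε := Real.exp_le_exp.2 hε
  rw [hcompl] at hratio
  have := aux_ratio (P (E ∩ B)).toReal (P (E ∩ Bᶜ)).toReal (P B).toReal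
    (Real.exp ε) ENNReal.toReal_nonneg hEBc hB0 hB1 he hratio
  rw [hBE, hBcE, hsplit, hcompl, Real.exp_neg]
  exact this
end
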